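/- A pair (R, y) ∈ ℝ^{3×3} × ℝ satisfies the homogenized constraints RᵀR = y²I₃, RRᵀ = y²I₃, R⁽¹⁾ × R⁽²⁾ = yR⁽³⁾, R⁽²⁾ × R⁽³⁾ = yR⁽¹⁾, R⁽³⁾ × R⁽¹⁾ = yR⁽²⁾, and y² = 1 if and only if y = 1 or y = −1 and the matrix y·R belongs to SO(3). In particular, for any solution, R/y ∈ SO(3). -/

import Mathlib

open Matrix

/-- The `j`-th column of a real 3×3 matrix, as a vector in `ℝ³`. -/
def col3 (R : Matrix (Fin 3) (Fin 3) ℝ) (j : Fin 3) : Fin 3 → ℝ := fun i => R i j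

/-- `SO(3)`: real 3×3 matrices with `RᵀR = I` and `det R = 1`. -/
def SO3 : Set (Matrix (Fin 3) (Fin 3) ℝ) := {R | Rᵀ * R = 1 ∧ R.det = 1}

/-- The homogenized `SO(3)` constraints on a pair `(R, y)`. -/
def HomogenizedConstraints (R : Matrix (Fin 3) (Fin 3) ℝ) (y : ℝ) : Prop :=
  Rᵀ * R = y ^ 2 • (1 : Matrix (Fin 3) (Fin 3) ℝ) ∧
  R * Rᵀ = y ^ 2 • (1 : Matrix (Fin 3) (Fin 3) ℝ) ∧
  col3 R 0 ⨯₃ col3 R 1 = y • col3 R 2 ∧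
  col3 R 1 ⨯₃ col3 R 2 = y • col3 R 0 ∧
  col3 R 2 ⨯₃ col3 R 0 = y • col3 R 1 ∧
  y ^ 2 = 1

lemma cross01_adj (S : Matrix (Fin 3) (Fin 3) ℝ) :
    col3 S 0 ⨯₃ col3 S 1 = fun i => adjugate S 2 i := by
  funext i; fin_cases i <;> simp [col3, cross_apply, adjugate_fin_three] <;> ring

lemma cross12_adj (S : Matrix (Fin 3) (Fin 3) ℝ) :
    col3 S 1 ⨯₃ col3 S 2 = fun i => adjugate S 0 i := by
  funext i; fin_cases i <;> simp [col3, cross_apply, adjugate_fin_three] <;> ring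

lemma cross20_adj (S : Matrix (Fin 3) (Fin 3) ℝ) :
    col3 S 2 ⨯₃ col3 S 0 = fun i => adjugate S 1 i := by
  funext i; fin_cases i <;> simp [col3, cross_apply, adjugate_fin_three] <;> ring

lemma hc_to_so3 (R : Matrix (Fin 3) (Fin 3) ℝ) (y : ℝ) (h : HomogenizedConstraints R y) :
    (y = 1 ∨ y = -1) ∧ y • R ∈ SO3 := by
  obtain ⟨h1, h2, h3, h4, h5, h6⟩ := h
  have hy : y = 1 ∨ y = -1 := by
    have : (y - 1) * (y + 1) = 0 := by linear_combination h6
    rcases mul_eq_zero.mp this with h | h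
    · left; linarith
    · right; linarith
  -- det R = y
  have e0 := congrFun h3 0
  have e1 := congrFun h3 1
  have e2 := congrFun h3 2
  have h22 := congrFun (congrFun h1 2) 2
  simp [col3, cross_apply, Matrix.mul_apply, Fin.sum_univ_three, Matrix.one_apply,
    Matrix.smul_apply, transpose_apply, Pi.smul_apply, smul_eq_mul] at e0 e1 e2 h22
  have hdet : R.det = y := by
    rw [det_fin_three]
    linear_combination (R 0 2) * e0 + (R 1 2) * e1 + (R 2 2) * e2 + y * h22 + y * h6
  refine ⟨hy, ?_, ?_⟩
  · rw [transpose_smul, Matrix.smul_mul, Matrix.mul_smul, h1, smul_smul, smul_smul]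
    have : y * y * y ^ 2 = 1 := by linear_combination (y ^ 2 + 1) * h6
    rw [this, one_smul]
  · rw [det_smul, hdet]
    simp only [Fintype.card_fin]
    linear_combination (y ^ 2 + 1) * h6

lemma so3_to_hc (R : Matrix (Fin 3) (Fin 3) ℝ) (y : ℝ) (hy : y = 1 ∨ y = -1)
    (hS : y • R ∈ SO3) : HomogenizedConstraints R y := by
  obtain ⟨hS1, hS2⟩ := hS
  have hy2 : y ^ 2 = 1 := by rcases hy with h | h <;> rw [h] <;> norm_num
  have hRtR : Rᵀ * R = 1 := by
    rw [transpose_smul, Matrix.smul_mul, Matrix.mul_smul, smul_smul, ← sq, hy2, one_smul] at hS1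
    exact hS1
  have hRRt : R * Rᵀ = 1 := mul_eq_one_comm.mp hRtR
  have hdet : R.det = y := by
    rw [det_smul, Fintype.card_fin] at hS2
    have h3 : y ^ 3 * R.det = 1 := hS2
    linear_combination y * h3 - R.det * (1 + y ^ 2) * hy2
  have hadj : adjugate R = y • Rᵀ := by
    have ha : R * adjugate R = y • 1 := by rw [mul_adjugate, hdet]
    have hb : R * (y • Rᵀ) = y • 1 := by rw [Matrix.mul_smul, hRRt]
    calc adjugate R = (Rᵀ * R) * adjugate R := by rw [hRtR, one_mul]
      _ = Rᵀ * (R * adjugate R) := by rw [mul_assoc]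
      _ = Rᵀ * (R * (y • Rᵀ)) := by rw [ha, hb]
      _ = (Rᵀ * R) * (y • Rᵀ) := by rw [mul_assoc]
      _ = y • Rᵀ := by rw [hRtR, one_mul]
  have hcross : ∀ k : Fin 3, (fun i => adjugate R k i) = y • col3 R k := by
    intro k; funext i
    rw [hadj]
    simp [col3, Matrix.smul_apply, transpose_apply]
  refine ⟨?_, ?_, ?_, ?_, ?_, hy2⟩
  · rw [hRtR, hy2, one_smul]
  · rw [hRRt, hy2, one_smul]
  · rw [cross01_adj, hcross 2]
  · rw [cross12_adj, hcross 0]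
  · rw [cross20_adj, hcross 1]

theorem homogenized_so3_characterization (R : Matrix (Fin 3) (Fin 3) ℝ) (y : ℝ) :
    (HomogenizedConstraints R y ↔ (y = 1 ∨ y = -1) ∧ y • R ∈ SO3) ∧
    (HomogenizedConstraints R y → y⁻¹ • R ∈ SO3) := by
  constructor
  · exact ⟨hc_to_so3 R y, fun ⟨hy, hS⟩ => so3_to_hc R y hy hS⟩
  · intro h
    obtain ⟨hy, hS⟩ := hc_to_so3 R y h
    have : y⁻¹ = y := by rcases hy with h' | h' <;> rw [h'] <;> norm_num
    rw [this]
    exact hS
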